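/- Let M be a discrete skip free process such that T_1(M) < ∞ almost surely and such that Θ^a(M) ≐ M for a = 0 and a = 1. Then lim_{n→∞} [M]_n = +∞ almost surely. -/

import Mathlib

open MeasureTheory ProbabilityTheory Filter Finset
open scoped ENNReal NNReal

noncomputable section

/-- The quadratic variation `[s]_n` of a discrete path `s`. -/
def qv (s : ℕ → ℤ) (n : ℕ) : ℕ :=
  ∑ k ∈ Finset.range n, (s (k + 1) - s k).natAbs ^ 2

/-- Reflection of a discrete path at level `a`:
`Θ^a(s)_n = ∑_{k=1}^n (1_{k ≤ T_a(s)} - 1_{k > T_a(s)}) (s_k - s_{k-1})`,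
where `k ≤ T_a(s)` iff `s_j ≠ a` for every `j < k`. -/
def reflect (a : ℤ) (s : ℕ → ℤ) : ℕ → ℤ := fun n =>
  ∑ k ∈ Finset.range n, if ∀ j ≤ k, s j ≠ a then s (k + 1) - s k else s k - s (k + 1)

/-- A (deterministic) skip free path: starts at `0` and has increments in `{-1, 0, 1}`. -/
def SkipFreePath (s : ℕ → ℤ) : Prop :=
  s 0 = 0 ∧ ∀ n, s (n + 1) - s n = 1 ∨ s (n + 1) - s n = 0 ∨ s (n + 1) - s n = -1

/-- The uniform law on `{-1, +1} ⊆ ℤ`. -/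
def bern : Measure ℤ :=
  (2 : ℝ≥0∞)⁻¹ • Measure.dirac (1 : ℤ) + (2 : ℝ≥0∞)⁻¹ • Measure.dirac (-1 : ℤ)

/-- `S` is a symmetric Bernoulli random walk: `S_0 = 0` a.s. and the increments are
i.i.d. uniform on `{-1, +1}`. -/
def IsBernoulliRW {Ω : Type*} [MeasurableSpace Ω] (P : Measure Ω) (S : ℕ → Ω → ℤ) : Prop :=
  (∀ᵐ ω ∂P, S 0 ω = 0) ∧
    iIndepFun (fun n ω => S (n + 1) ω - S n ω) P ∧
    ∀ n, Measure.map (fun ω => S (n + 1) ω - S n ω) P = bern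

/-- `M` is a discrete Ocone local martingale: it is equal in law to a symmetric Bernoulli
random walk time changed by an independent nondecreasing `ℕ`-valued process with
increments in `{0, 1}`. -/
def IsDiscreteOcone {Ω : Type*} [MeasurableSpace Ω] (P : Measure Ω) (M : ℕ → Ω → ℤ) : Prop :=
  ∃ (Ω' : Type) (_ : MeasurableSpace Ω') (P' : Measure Ω') (S : ℕ → Ω' → ℤ) (A : ℕ → Ω' → ℕ),
    IsProbabilityMeasure P' ∧ IsBernoulliRW P' S ∧
    (∀ ω, A 0 ω = 0) ∧ (∀ ω n, A (n + 1) ω = A n ω ∨ A (n + 1) ω = A n ω + 1) ∧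
    IndepFun (fun ω => (S · ω)) (fun ω => (A · ω)) P' ∧
    Measure.map (fun ω => (fun n => M n ω)) P
      = Measure.map (fun ω => (fun n => S (A n ω) ω)) P'

/-- The successive times at which the quadratic variation of `s` increases:
`τ_0 = 0` and `τ_{n+1} = inf {k > τ_n : [s]_k = n + 1}`, with `inf ∅ = τ_n`. -/
lemma reflect_succ (a : ℤ) (s : ℕ → ℤ) (n : ℕ) :
    reflect a s (n + 1) = reflect a s n
      + (if ∀ j ≤ n, s j ≠ a then s (n + 1) - s n else s n - s (n + 1)) := by
  simp [reflect, Finset.sum_range_succ]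

lemma cond_iff (a : ℤ) (s : ℕ → ℤ) (T : ℕ) (hT : s T = a)
    (hmin : ∀ j < T, s j ≠ a) (k : ℕ) :
    (∀ j ≤ k, s j ≠ a) ↔ k < T := by
  constructor
  · intro h
    by_contra hk
    exact h T (not_lt.mp hk) hT
  · intro hk j hj
    exact hmin j (lt_of_le_of_lt hj hk)

lemma reflect_of_le (a : ℤ) (s : ℕ → ℤ) (T : ℕ) (hT : s T = a)
    (hmin : ∀ j < T, s j ≠ a) {n : ℕ} (hn : n ≤ T) :
    reflect a s n = s n - s 0 := by
  unfold reflect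
  rw [Finset.sum_congr rfl (fun k hk => ?_), Finset.sum_range_sub s n]
  rw [if_pos]
  exact (cond_iff a s T hT hmin k).mpr (lt_of_lt_of_le (Finset.mem_range.mp hk) hn)

lemma reflect_of_ge (a : ℤ) (s : ℕ → ℤ) (T : ℕ) (hT : s T = a)
    (hmin : ∀ j < T, s j ≠ a) {n : ℕ} (hn : T ≤ n) :
    reflect a s n = 2 * a - s 0 - s n := by
  induction n, hn using Nat.le_induction with
  | base =>
    rw [reflect_of_le a s T hT hmin le_rfl, hT]; ring
  | succ n hn ih =>
    rw [reflect_succ, ih, if_neg]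
    · ring
    · rw [cond_iff a s T hT hmin]; omega

lemma qv_mono (s : ℕ → ℤ) : Monotone (qv s) := fun _ _ h =>
  Finset.sum_le_sum_of_subset (Finset.range_subset_range.mpr h)

lemma qv_tendsto (s : ℕ → ℤ) (h : ∀ v : ℤ, ¬ ∃ N, ∀ n ≥ N, s n = v) :
    Tendsto (qv s) atTop atTop := by
  apply tendsto_atTop_atTop_of_monotone (qv_mono s)
  intro b
  induction b with
  | zero => exact ⟨0, Nat.zero_le _⟩
  | succ b ih =>
    obtain ⟨n, hn⟩ := ih
    have h' := h (s n)
    push_neg at h'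
    obtain ⟨m, hm, hms⟩ := h' n
    refine ⟨m, ?_⟩
    have hsum : qv s m = qv s n + ∑ k ∈ Finset.Ico n m, (s (k + 1) - s k).natAbs ^ 2 := by
      unfold qv
      simp only [Finset.range_eq_Ico]
      exact (Finset.sum_Ico_consecutive _ (Nat.zero_le n) hm).symm
    have hlt : qv s n < qv s m := by
      rcases lt_or_eq_of_le (qv_mono s hm) with h'' | h''
      · exact h''
      · exfalso
        have hz : ∀ k ∈ Finset.Ico n m, (s (k + 1) - s k).natAbs ^ 2 = 0 := by
          rw [← Finset.sum_eq_zero_iff]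
          omega
        have hconst : ∀ j, n ≤ j → j ≤ m → s j = s n := by
          intro j hj
          induction j, hj using Nat.le_induction with
          | base => intro _; rfl
          | succ j hj ih2 =>
            intro hjm
            have hk := hz j (Finset.mem_Ico.mpr ⟨hj, by omega⟩)
            have hk' : (s (j + 1) - s j).natAbs = 0 :=
              pow_eq_zero_iff (two_ne_zero) |>.mp hk
            have : s (j + 1) = s j := by
              have := Int.natAbs_eq_zero.mp hk'
              omega
            rw [this, ih2 (by omega)]
        exact hms (hconst m hm le_rfl)
    omega

def tauP (s : ℕ → ℤ) : ℕ → ℕ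
  | 0 => 0
  | n + 1 => max (tauP s n) (sInf {k | tauP s n < k ∧ qv s k = n + 1})

/-- The time-changed path `S^s = (s_{τ_n})_n`. -/
def SM (s : ℕ → ℤ) : ℕ → ℤ := fun n => s (tauP s n)

/-- **Lemma 2.** Any skip free process `M` such that `T_1(M) < ∞` a.s. and
`Θ^a(M) ≐ M` for `a = 0` and `a = 1` satisfies `[M]_n → +∞` a.s. -/
theorem skip_free_reflection_qv_tendsto_atTop
    {Ω : Type*} [MeasurableSpace Ω] (P : Measure Ω) [IsProbabilityMeasure P]
    (M : ℕ → Ω → ℤ) (hmeas : ∀ n, Measurable (M n))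
    (hskip : ∀ ω, SkipFreePath (fun n => M n ω))
    (hT1 : ∀ᵐ ω ∂P, ∃ k, M k ω = 1)
    (hrefl : ∀ a : ℤ, a = 0 ∨ a = 1 →
      Measure.map (fun ω => reflect a (fun n => M n ω)) P
        = Measure.map (fun ω => (fun n => M n ω)) P) :
    ∀ᵐ ω ∂P, Tendsto (fun n => qv (fun k => M k ω) n) atTop atTop := by
  classical
  have hpathm : Measurable (fun ω => (fun n => M n ω)) :=
    measurable_pi_lambda _ hmeas
  set Av : ℤ → Set (ℕ → ℤ) := fun v => {s | ∃ N, ∀ n ≥ N, s n = v} with hAvdef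
  have hA : ∀ v : ℤ, MeasurableSet (Av v) := by
    intro v
    have : Av v = ⋃ N : ℕ, ⋂ n : ℕ, ⋂ _ : N ≤ n, {s : ℕ → ℤ | s n = v} := by
      ext s
      simp [hAvdef, Set.mem_iUnion, Set.mem_iInter]
    rw [this]
    exact MeasurableSet.iUnion fun N => MeasurableSet.iInter fun n =>
      MeasurableSet.iInter fun _ =>
        measurableSet_eq_fun (measurable_pi_apply n) measurable_const
  have hreflm : ∀ a : ℤ, Measurable (fun ω => reflect a (fun n => M n ω)) := by
    intro a
    apply measurable_pi_lambda
    intro n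
    simp only [reflect]
    apply Finset.measurable_sum
    intro k _
    have hc : MeasurableSet {ω | ∀ j ≤ k, M j ω ≠ a} := by
      have : {ω | ∀ j ≤ k, M j ω ≠ a} = ⋂ j : ℕ, ⋂ _ : j ≤ k, {ω | M j ω ≠ a} := by
        ext ω; simp
      rw [this]
      exact MeasurableSet.iInter fun j => MeasurableSet.iInter fun _ =>
        (measurableSet_eq_fun (hmeas j) measurable_const).compl
    exact Measurable.ite hc ((hmeas (k + 1)).sub (hmeas k))
      ((hmeas k).sub (hmeas (k + 1)))
  set Bv : ℤ → Set Ω := fun v => (fun ω => (fun n => M n ω)) ⁻¹' Av v with hBvdef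
  have hBm : ∀ v : ℤ, MeasurableSet (Bv v) := fun v => hpathm (hA v)
  have hmemB : ∀ (w : ℤ) (ω : Ω), ω ∈ Bv w ↔ ∃ N, ∀ n ≥ N, M n ω = w := fun w ω => Iff.rfl
  have hmapeq : ∀ a : ℤ, a = 0 ∨ a = 1 → ∀ v : ℤ,
      P ((fun ω => reflect a (fun n => M n ω)) ⁻¹' Av v) = P (Bv v) := by
    intro a ha v
    rw [← Measure.map_apply (hreflm a) (hA v), hrefl a ha,
      Measure.map_apply hpathm (hA v)]
  -- reflection at 0 is negation
  have refl0 : ∀ ω, reflect 0 (fun n => M n ω) = fun n => - M n ω := by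
    intro ω
    funext n
    have h := reflect_of_ge 0 (fun n => M n ω) 0 (hskip ω).1
      (fun j hj => absurd hj (Nat.not_lt_zero j)) (Nat.zero_le n)
    rw [h, show M 0 ω = 0 from (hskip ω).1]; ring
  have h0 : ∀ v : ℤ, P (Bv (-v)) = P (Bv v) := by
    intro v
    have hset : (fun ω => reflect 0 (fun n => M n ω)) ⁻¹' Av v = Bv (-v) := by
      ext ω
      constructor
      · rintro ⟨N, hN⟩
        refine ⟨N, fun n hn => ?_⟩
        have h1 : reflect 0 (fun n => M n ω) n = v := hN n hn
        have h2 : reflect 0 (fun n => M n ω) n = - M n ω := congrFun (refl0 ω) n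
        show M n ω = -v
        omega
      · rintro ⟨N, hN⟩
        refine ⟨N, fun n hn => ?_⟩
        have h1 : M n ω = -v := hN n hn
        have h2 : reflect 0 (fun n => M n ω) n = - M n ω := congrFun (refl0 ω) n
        show reflect 0 (fun n => M n ω) n = v
        omega
    rw [← hset, hmapeq 0 (Or.inl rfl) v]
  -- reflection at 1
  have refl1 : ∀ ω, (∃ k, M k ω = 1) → ∀ v : ℤ,
      (∃ N, ∀ n ≥ N, M n ω = v) →
      ((fun n => reflect 1 (fun m => M m ω) n) ∈ Av (2 - v)) := by
    intro ω hk v hv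
    obtain ⟨N, hN⟩ := hv
    refine ⟨max N (Nat.find hk), fun n hn => ?_⟩
    have h := reflect_of_ge 1 (fun m => M m ω) (Nat.find hk) (Nat.find_spec hk)
      (fun j hj => Nat.find_min hk hj) (le_trans (le_max_right _ _) hn)
    have h00 : M 0 ω = 0 := (hskip ω).1
    have hnv : M n ω = v := hN n (le_trans (le_max_left _ _) hn)
    show reflect 1 (fun m => M m ω) n = 2 - v
    rw [h]
    show 2 * 1 - M 0 ω - M n ω = 2 - v
    omega
  have hGc : P {ω | ¬ ∃ k, M k ω = 1} = 0 := ae_iff.mp hT1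
  have h1 : ∀ v : ℤ, P (Bv v) ≤ P (Bv (v - 2)) := by
    intro v
    have hsub : Bv v ⊆ ((fun ω => reflect 1 (fun n => M n ω)) ⁻¹' Av (2 - v))
        ∪ {ω | ¬ ∃ k, M k ω = 1} := by
      intro ω hω
      by_cases hk : ∃ k, M k ω = 1
      · exact Or.inl (refl1 ω hk v ((hmemB v ω).mp hω))
      · exact Or.inr hk
    have key : P (Bv v) ≤ P (Bv (2 - v)) := by
      calc P (Bv v)
          ≤ P ((fun ω => reflect 1 (fun n => M n ω)) ⁻¹' Av (2 - v))
            + P {ω | ¬ ∃ k, M k ω = 1} :=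
            le_trans (measure_mono hsub) (measure_union_le _ _)
        _ = P (Bv (2 - v)) := by rw [hGc, add_zero, hmapeq 1 (Or.inr rfl) (2 - v)]
    have h02 := h0 (2 - v)
    rw [show -(2 - v) = v - 2 by ring] at h02
    rw [h02]
    exact key
  have hchain : ∀ (v : ℤ) (k : ℕ), P (Bv v) ≤ P (Bv (v - 2 * k)) := by
    intro v k
    induction k with
    | zero => simp
    | succ k ih =>
      refine le_trans ih (le_trans (h1 (v - 2 * k)) (le_of_eq ?_))
      congr 1
      push_cast
      ring
  have hv0 : ∀ v : ℤ, P (Bv v) = 0 := by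
    intro v
    by_contra hne
    have hdisj : Pairwise (Function.onFun Disjoint fun k : ℕ => Bv (v - 2 * k)) := by
      intro k l hkl
      refine Set.disjoint_left.mpr ?_
      intro ω hωk hωl
      obtain ⟨N1, hN1⟩ := (hmemB _ ω).mp hωk
      obtain ⟨N2, hN2⟩ := (hmemB _ ω).mp hωl
      have e1 := hN1 (max N1 N2) (le_max_left _ _)
      have e2 := hN2 (max N1 N2) (le_max_right _ _)
      rw [e1] at e2
      exact hkl (by omega)
    have hun : P (⋃ k : ℕ, Bv (v - 2 * k)) = ∑' k : ℕ, P (Bv (v - 2 * k)) :=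
      measure_iUnion hdisj (fun k => hBm _)
    have htop : (⊤ : ℝ≥0∞) ≤ P (⋃ k : ℕ, Bv (v - 2 * k)) := by
      rw [hun]
      calc (⊤ : ℝ≥0∞) = ∑' _ : ℕ, P (Bv v) :=
            (ENNReal.tsum_const_eq_top_of_ne_zero hne).symm
        _ ≤ ∑' k : ℕ, P (Bv (v - 2 * k)) := ENNReal.tsum_le_tsum (hchain v)
    have := le_trans htop prob_le_one
    simp at this
  have hunion : P (⋃ v : ℤ, Bv v) = 0 := measure_iUnion_null hv0
  have hae : ∀ᵐ ω ∂P, ∀ v : ℤ, ¬ ∃ N, ∀ n ≥ N, M n ω = v := by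
    rw [ae_iff]
    refine measure_mono_null ?_ hunion
    intro ω hω
    simp only [Set.mem_setOf_eq, not_forall, not_not] at hω
    obtain ⟨v, hv⟩ := hω
    exact Set.mem_iUnion.mpr ⟨v, hv⟩
  filter_upwards [hae] with ω hω
  exact qv_tendsto _ hω
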